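/- Let k be a field of characteristic zero and R = k⟨x,y⟩/(xy − yx − y²). For each n ≥ 1 let ε_n : R → M_n(k) be the unique k-algebra homomorphism with ε_n(x) = X⁰ and ε_n(y) = J_n (well defined since X⁰*J_n − J_n*X⁰ = J_n^2). Then the intersection over all n of the kernels of ε_n is zero: for every nonzero f ∈ R there exists n with ε_n(f) ≠ 0. In particular, R is residually finite dimensional. -/
import Mathlib

open Polynomial Finset


/-- The defining relation `x*y = y*x + y*y` of the Jordanian algebra
`R = k⟨x,y⟩/(xy - yx - y²)`, as a relation on the free algebra on two generators. -/
inductive JordanRel (k : Type) [Field k] :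
    FreeAlgebra k (Fin 2) → FreeAlgebra k (Fin 2) → Prop
  | rel : JordanRel k (FreeAlgebra.ι k 0 * FreeAlgebra.ι k 1)
      (FreeAlgebra.ι k 1 * FreeAlgebra.ι k 0 + FreeAlgebra.ι k 1 * FreeAlgebra.ι k 1)

/-- The Jordanian algebra `R = k⟨x,y⟩/(xy - yx - y²)`. -/
abbrev Jordanian (k : Type) [Field k] := RingQuot (JordanRel k)

/-- The image of the generator `x` in the Jordanian algebra. -/
noncomputable def Jordanian.x (k : Type) [Field k] : Jordanian k :=
  RingQuot.mkAlgHom k (JordanRel k) (FreeAlgebra.ι k 0)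

/-- The image of the generator `y` in the Jordanian algebra. -/
noncomputable def Jordanian.y (k : Type) [Field k] : Jordanian k :=
  RingQuot.mkAlgHom k (JordanRel k) (FreeAlgebra.ι k 1)

/-- The `n × n` nilpotent Jordan block with ones on the subdiagonal:
`(J_n)_{i,j} = 1` iff `i = j + 1`. -/
def jordanBlock (k : Type) [Field k] (n : ℕ) : Matrix (Fin n) (Fin n) k :=
  Matrix.of fun i j => if (i : ℕ) = (j : ℕ) + 1 then 1 else 0

/-- The matrix `X⁰` whose only nonzero entries are `(X⁰)_{j+1,j} = j` for `j = 0,…,n-2`. -/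
def Xzero (k : Type) [Field k] (n : ℕ) : Matrix (Fin n) (Fin n) k :=
  Matrix.of fun i j => if (i : ℕ) = (j : ℕ) + 1 then ((j : ℕ) : k) else 0

section Aux

variable {k : Type} [Field k]

/-- "shift by d" matrices with coefficients `c`. -/
def shiftMat (k : Type) [Field k] (n d : ℕ) (c : ℕ → k) : Matrix (Fin n) (Fin n) k :=
  Matrix.of fun a b => if (a : ℕ) = (b : ℕ) + d then c b else 0

lemma shiftMat_mul (n d e : ℕ) (c c' : ℕ → k) :
    shiftMat k n d c * shiftMat k n e c' =
      shiftMat k n (d + e) (fun b => c (b + e) * c' b) := by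
  ext a b
  simp only [Matrix.mul_apply, shiftMat, Matrix.of_apply]
  by_cases h : (b : ℕ) + e < n
  · rw [Finset.sum_eq_single (⟨(b : ℕ) + e, h⟩ : Fin n)]
    · simp only [Fin.val_mk, if_pos trivial]
      by_cases ha : (a : ℕ) = (b : ℕ) + (d + e)
      · rw [if_pos (by omega : (a : ℕ) = (b : ℕ) + e + d), if_pos ha]
      · rw [if_neg (by omega : ¬ (a : ℕ) = (b : ℕ) + e + d), if_neg ha, zero_mul]
    · intro x _ hx
      have hne : ¬ ((x : ℕ) = (b : ℕ) + e) := fun hh => hx (Fin.ext hh)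
      simp [hne]
    · simp
  · rw [Finset.sum_eq_zero, if_neg]
    · have := a.isLt; omega
    · intro x _
      have hne : ¬ ((x : ℕ) = (b : ℕ) + e) := by have := x.isLt; omega
      simp [hne]

lemma shiftMat_congr (n d : ℕ) {c c' : ℕ → k} (h : ∀ b, b < n → c b = c' b) :
    shiftMat k n d c = shiftMat k n d c' := by
  ext a b
  simp only [shiftMat, Matrix.of_apply]
  rw [h b b.isLt]

lemma jordanBlock_eq (n : ℕ) : jordanBlock k n = shiftMat k n 1 (fun _ => 1) := rfl

lemma Xzero_eq (n : ℕ) : Xzero k n = shiftMat k n 1 (fun b => (b : k)) := rfl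

lemma shiftMat_zero (n : ℕ) : shiftMat k n 0 (fun _ => 1) = 1 := by
  ext a b
  simp [shiftMat, Matrix.one_apply, Fin.ext_iff, eq_comm]

lemma jordan_pow (n i : ℕ) : (jordanBlock k n) ^ i = shiftMat k n i (fun _ => 1) := by
  induction i with
  | zero => rw [pow_zero, shiftMat_zero]
  | succ i ih =>
      rw [pow_succ, ih, jordanBlock_eq, shiftMat_mul]
      exact shiftMat_congr n (i + 1) fun b _ => one_mul 1

lemma asc_cast (m j : ℕ) : ((m.ascFactorial j : ℕ) : k) = ∏ t ∈ range j, ((m : k) + t) := by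
  induction j with
  | zero => simp
  | succ j ih =>
      rw [Finset.prod_range_succ, ← ih, Nat.ascFactorial_succ]
      push_cast
      ring

lemma X_pow (n j : ℕ) :
    (Xzero k n) ^ j = shiftMat k n j (fun b => (b.ascFactorial j : k)) := by
  induction j with
  | zero =>
      rw [pow_zero, ← shiftMat_zero]
      exact (shiftMat_congr n 0 fun b _ => by simp).symm
  | succ j ih =>
      rw [pow_succ, ih, Xzero_eq, shiftMat_mul]
      refine shiftMat_congr n (j + 1) fun b _ => ?_
      have h1 : b * (b + 1).ascFactorial j = b.ascFactorial (j + 1) := by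
        rw [Nat.ascFactorial_succ (n := b) (k := j)]
        exact Nat.succ_ascFactorial b j
      calc ((b + 1).ascFactorial j : k) * (b : k)
          = ((b * (b + 1).ascFactorial j : ℕ) : k) := by push_cast; ring
        _ = _ := by rw [h1]

lemma JX_pow (n i j : ℕ) :
    (jordanBlock k n) ^ i * (Xzero k n) ^ j =
      shiftMat k n (i + j) (fun b => (b.ascFactorial j : k)) := by
  rw [jordan_pow, X_pow, shiftMat_mul]
  exact shiftMat_congr n (i + j) fun b _ => one_mul _

lemma mat_rel (n : ℕ) :
    Xzero k n * jordanBlock k n =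
      jordanBlock k n * Xzero k n + jordanBlock k n * jordanBlock k n := by
  rw [Xzero_eq, jordanBlock_eq, shiftMat_mul, shiftMat_mul, shiftMat_mul]
  ext a b
  simp only [shiftMat, Matrix.of_apply, Matrix.add_apply]
  by_cases h : (a : ℕ) = (b : ℕ) + (1 + 1)
  · simp only [if_pos h]; push_cast; ring
  · simp only [if_neg h]; simp

end Aux

section Rep

variable (k : Type) [Field k]

noncomputable def epsN (n : ℕ) : Jordanian k →ₐ[k] Matrix (Fin n) (Fin n) k :=
  RingQuot.liftAlgHom k ⟨FreeAlgebra.lift k ![Xzero k n, jordanBlock k n], by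
    intro u v h
    cases h
    simp only [map_mul, map_add, FreeAlgebra.lift_ι_apply, Matrix.cons_val_zero,
      Matrix.cons_val_one, Matrix.head_cons]
    exact mat_rel n⟩

lemma epsN_x (n : ℕ) : epsN k n (Jordanian.x k) = Xzero k n := by
  rw [Jordanian.x, epsN, RingQuot.liftAlgHom_mkAlgHom_apply]
  simp

lemma epsN_y (n : ℕ) : epsN k n (Jordanian.y k) = jordanBlock k n := by
  rw [Jordanian.y, epsN, RingQuot.liftAlgHom_mkAlgHom_apply]
  simp

lemma jord_rel : Jordanian.x k * Jordanian.y k =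
    Jordanian.y k * Jordanian.x k + Jordanian.y k * Jordanian.y k := by
  have h := RingQuot.mkAlgHom_rel k (JordanRel.rel (k := k))
  simpa only [Jordanian.x, Jordanian.y, map_mul, map_add] using h

variable {k}

local notation "X" => Jordanian.x k
local notation "Y" => Jordanian.y k

lemma x_mul_ypow (p : ℕ) :
    X * Y ^ p = Y ^ p * X + (p : k) • (Y ^ (p + 1)) := by
  induction p with
  | zero => simp
  | succ p ih =>
      have : X * Y ^ (p + 1) = (X * Y ^ p) * Y := by
        rw [pow_succ, mul_assoc]
      rw [this, ih, add_mul, smul_mul_assoc, mul_assoc, jord_rel, mul_add,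
        ← mul_assoc, ← mul_assoc, ← pow_succ, ← pow_succ]
      push_cast
      rw [add_smul, one_smul]
      abel

/-- The span of the PBW monomials `y^i x^j`. -/
noncomputable def pbwSpan : Submodule k (Jordanian k) :=
  Submodule.span k (Set.range fun p : ℕ × ℕ => Y ^ p.1 * X ^ p.2)

lemma mono_mem (i j : ℕ) : Y ^ i * X ^ j ∈ (pbwSpan : Submodule k (Jordanian k)) :=
  Submodule.subset_span ⟨(i, j), rfl⟩

lemma mul_x_mem {a : Jordanian k} (ha : a ∈ (pbwSpan : Submodule k (Jordanian k))) :
    a * X ∈ (pbwSpan : Submodule k (Jordanian k)) := by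
  induction ha using Submodule.span_induction with
  | mem u hu =>
      obtain ⟨⟨i, j⟩, rfl⟩ := hu
      rw [mul_assoc, ← pow_succ]
      exact mono_mem i (j + 1)
  | zero => simpa using Submodule.zero_mem _
  | add u v _ _ hu hv => rw [add_mul]; exact Submodule.add_mem _ hu hv
  | smul c u _ hu => rw [smul_mul_assoc]; exact Submodule.smul_mem _ _ hu

lemma y_mul_mem {a : Jordanian k} (ha : a ∈ (pbwSpan : Submodule k (Jordanian k))) :
    Y * a ∈ (pbwSpan : Submodule k (Jordanian k)) := by
  induction ha using Submodule.span_induction with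
  | mem u hu =>
      obtain ⟨⟨i, j⟩, rfl⟩ := hu
      rw [← mul_assoc, ← pow_succ']
      exact mono_mem (i + 1) j
  | zero => simpa using Submodule.zero_mem _
  | add u v _ _ hu hv => rw [mul_add]; exact Submodule.add_mem _ hu hv
  | smul c u _ hu => rw [mul_smul_comm]; exact Submodule.smul_mem _ _ hu

lemma xpow_mul_ypow (j p : ℕ) :
    X ^ j * Y ^ p ∈ (pbwSpan : Submodule k (Jordanian k)) := by
  induction j generalizing p with
  | zero => simpa using mono_mem p 0
  | succ j ih =>
      have : X ^ (j + 1) * Y ^ p = X ^ j * (X * Y ^ p) := by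
        rw [pow_succ, mul_assoc]
      rw [this, x_mul_ypow, mul_add, ← mul_assoc, mul_smul_comm]
      exact Submodule.add_mem _ (mul_x_mem (ih p)) (Submodule.smul_mem _ _ (ih (p + 1)))

lemma ypow_mul_mem (i : ℕ) {a : Jordanian k}
    (ha : a ∈ (pbwSpan : Submodule k (Jordanian k))) :
    Y ^ i * a ∈ (pbwSpan : Submodule k (Jordanian k)) := by
  induction i with
  | zero => simpa using ha
  | succ i ih => rw [pow_succ', mul_assoc]; exact y_mul_mem ih

lemma mul_xpow_mem (q : ℕ) {a : Jordanian k}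
    (ha : a ∈ (pbwSpan : Submodule k (Jordanian k))) :
    a * X ^ q ∈ (pbwSpan : Submodule k (Jordanian k)) := by
  induction q with
  | zero => simpa using ha
  | succ q ih => rw [pow_succ, ← mul_assoc]; exact mul_x_mem ih

lemma mul_mem_pbw {a b : Jordanian k} (ha : a ∈ (pbwSpan : Submodule k (Jordanian k)))
    (hb : b ∈ (pbwSpan : Submodule k (Jordanian k))) :
    a * b ∈ (pbwSpan : Submodule k (Jordanian k)) := by
  induction hb using Submodule.span_induction with
  | mem v hv =>
      induction ha using Submodule.span_induction with
      | mem u hu =>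
          obtain ⟨⟨i, j⟩, rfl⟩ := hu
          obtain ⟨⟨p, q⟩, rfl⟩ := hv
          have key : Y ^ i * X ^ j * (Y ^ p * X ^ q) = Y ^ i * (X ^ j * Y ^ p * X ^ q) := by
            rw [mul_assoc, mul_assoc]
          rw [key]
          exact ypow_mul_mem i (mul_xpow_mem q (xpow_mul_ypow j p))
      | zero => rw [zero_mul]; exact Submodule.zero_mem _
      | add u w _ _ hu hw => rw [add_mul]; exact Submodule.add_mem _ hu hw
      | smul c u _ hu => rw [smul_mul_assoc]; exact Submodule.smul_mem _ _ hu
  | zero => rw [mul_zero]; exact Submodule.zero_mem _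
  | add u w _ _ hu hw => rw [mul_add]; exact Submodule.add_mem _ hu hw
  | smul c u _ hu => rw [mul_smul_comm]; exact Submodule.smul_mem _ _ hu

lemma mem_pbwSpan (f : Jordanian k) : f ∈ (pbwSpan : Submodule k (Jordanian k)) := by
  obtain ⟨g, rfl⟩ := RingQuot.mkAlgHom_surjective k (JordanRel k) f
  induction g using FreeAlgebra.induction with
  | grade0 r =>
      rw [AlgHom.commutes, Algebra.algebraMap_eq_smul_one]
      exact Submodule.smul_mem _ _ (by simpa using mono_mem 0 0)
  | grade1 i =>
      fin_cases i
      · exact (by simpa using mono_mem 0 1 : Jordanian.x k ∈ _)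
      · exact (by simpa using mono_mem 1 0 : Jordanian.y k ∈ _)
  | mul u v hu hv => rw [map_mul]; exact mul_mem_pbw hu hv
  | add u v hu hv => rw [map_add]; exact Submodule.add_mem _ hu hv

end Rep

section Main

variable {k : Type} [Field k] [CharZero k]

lemma exists_nat_eval_ne_zero {P : Polynomial k} (hP : P ≠ 0) :
    ∃ m : ℕ, P.eval (m : k) ≠ 0 := by
  by_contra h
  push_neg at h
  apply hP
  apply Polynomial.eq_zero_of_infinite_isRoot
  refine Set.Infinite.mono ?_ (Set.infinite_range_of_injective (Nat.cast_injective (R := k)))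
  rintro _ ⟨m, rfl⟩
  exact h m

end Main

/-- Let `k` be a field of characteristic zero and
`R = k⟨x,y⟩/(xy - yx - y²)`.  For each `n ≥ 1` let `ε_n : R → M_n(k)` be the (unique)
`k`-algebra homomorphism with `ε_n(x) = X⁰` and `ε_n(y) = J_n`.  Then the intersection of the
kernels of the `ε_n` is zero: for every nonzero `f ∈ R` there exist `n ≥ 1` and such a
homomorphism `ε` with `ε f ≠ 0`.  In particular, `R` is residually finite dimensional. -/
theorem jordanian_residually_finite_dimensional (k : Type) [Field k] [CharZero k]
    (f : Jordanian k) (hf : f ≠ 0) :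
    ∃ n : ℕ, 1 ≤ n ∧ ∃ ε : Jordanian k →ₐ[k] Matrix (Fin n) (Fin n) k,
      ε (Jordanian.x k) = Xzero k n ∧ ε (Jordanian.y k) = jordanBlock k n ∧ ε f ≠ 0 := by
  obtain ⟨c, hc⟩ := Finsupp.mem_span_range_iff_exists_finsupp.mp (mem_pbwSpan f)
  have hc0 : c ≠ 0 := by
    rintro rfl
    rw [Finsupp.sum_zero_index] at hc
    exact hf hc.symm
  obtain ⟨p0, hp0⟩ := Finsupp.ne_iff.mp hc0
  rw [Finsupp.coe_zero, Pi.zero_apply] at hp0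
  set d := p0.1 + p0.2 with hd
  set T := c.support.filter (fun p => p.1 + p.2 = d) with hT
  have hp0T : p0 ∈ T := Finset.mem_filter.mpr ⟨Finsupp.mem_support_iff.mpr hp0, rfl⟩
  set P : Polynomial k :=
    ∑ p ∈ T, Polynomial.C (c p) *
      ∏ t ∈ Finset.range p.2, (Polynomial.X + Polynomial.C (t : k)) with hPdef
  have monic_pr : ∀ j : ℕ,
      (∏ t ∈ Finset.range j, (Polynomial.X + Polynomial.C (t : k))).Monic :=
    fun j => Polynomial.monic_prod_of_monic _ _ fun t _ => Polynomial.monic_X_add_C _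
  have deg_pr : ∀ j : ℕ,
      (∏ t ∈ Finset.range j, (Polynomial.X + Polynomial.C (t : k))).natDegree = j := by
    intro j
    rw [Polynomial.natDegree_prod _ _ (fun t _ => (Polynomial.monic_X_add_C _).ne_zero)]
    simp only [Polynomial.natDegree_X_add_C]
    rw [Finset.sum_const, Finset.card_range, smul_eq_mul, mul_one]
  have hTne : (T.image Prod.snd).Nonempty := ⟨p0.2, Finset.mem_image_of_mem _ hp0T⟩
  set j1 := (T.image Prod.snd).max' hTne with hj1
  obtain ⟨p1, hp1T, hp1⟩ := Finset.mem_image.mp ((T.image Prod.snd).max'_mem hTne)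
  rw [← hj1] at hp1
  have hmax : ∀ p ∈ T, p.2 ≤ j1 := fun p hp =>
    Finset.le_max' _ _ (Finset.mem_image_of_mem _ hp)
  have huniq : ∀ p ∈ T, p.2 = j1 → p = p1 := by
    intro p hp h2
    have h1 : p.1 + p.2 = d := (Finset.mem_filter.mp hp).2
    have h1' : p1.1 + p1.2 = d := (Finset.mem_filter.mp hp1T).2
    have hfst : p.1 = p1.1 := by omega
    exact Prod.ext hfst (h2.trans hp1.symm)
  have hcoeff : P.coeff j1 = c p1 := by
    rw [hPdef, Polynomial.finset_sum_coeff, Finset.sum_eq_single p1]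
    · rw [Polynomial.coeff_C_mul]
      have hmc := (monic_pr p1.2).coeff_natDegree
      rw [deg_pr p1.2] at hmc
      rw [← hp1, hmc, mul_one]
    · intro p hp hne
      have hlt : p.2 < j1 := lt_of_le_of_ne (hmax p hp) (fun h => hne (huniq p hp h))
      rw [Polynomial.coeff_C_mul, Polynomial.coeff_eq_zero_of_natDegree_lt, mul_zero]
      rw [deg_pr p.2]
      exact hlt
    · intro h
      exact absurd hp1T h
  have hcp1 : c p1 ≠ 0 := Finsupp.mem_support_iff.mp (Finset.mem_filter.mp hp1T).1
  have hPne : P ≠ 0 := by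
    intro h
    rw [h, Polynomial.coeff_zero] at hcoeff
    exact hcp1 hcoeff.symm
  obtain ⟨m, hm⟩ := exists_nat_eval_ne_zero hPne
  refine ⟨m + d + 1, by omega, epsN k (m + d + 1), epsN_x k _, epsN_y k _, ?_⟩
  set n := m + d + 1 with hn
  set A : Fin n := ⟨m + d, by omega⟩ with hA
  set B : Fin n := ⟨m, by omega⟩ with hB
  have hEf : epsN k n f = ∑ p ∈ c.support,
      c p • shiftMat k n (p.1 + p.2) (fun b => (b.ascFactorial p.2 : k)) := by
    rw [← hc, Finsupp.sum, map_sum]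
    refine Finset.sum_congr rfl fun p _ => ?_
    rw [map_smul, map_mul, map_pow, map_pow, epsN_x, epsN_y, JX_pow]
  have hEntry : (epsN k n f) A B = P.eval (m : k) := by
    rw [hEf, Matrix.sum_apply]
    have hterm : ∀ p ∈ c.support,
        (c p • shiftMat k n (p.1 + p.2) (fun b => (b.ascFactorial p.2 : k))) A B
          = if p.1 + p.2 = d then c p * (m.ascFactorial p.2 : k) else 0 := by
      intro p _
      rw [Matrix.smul_apply]
      simp only [shiftMat, Matrix.of_apply, hA, hB, Fin.val_mk]
      by_cases hpd : p.1 + p.2 = d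
      · rw [if_pos (by omega : m + d = m + (p.1 + p.2)), if_pos hpd, smul_eq_mul]
      · rw [if_neg (by omega : ¬ m + d = m + (p.1 + p.2)), if_neg hpd, smul_zero]
    rw [Finset.sum_congr rfl hterm, ← Finset.sum_filter, ← hT, hPdef,
      Polynomial.eval_finset_sum]
    refine Finset.sum_congr rfl fun p _ => ?_
    rw [Polynomial.eval_mul, Polynomial.eval_C, Polynomial.eval_prod, asc_cast]
    simp
  intro h0
  rw [h0, Matrix.zero_apply] at hEntry
  exact hm hEntry.symm
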